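/- For the learning rate sequence α_t = (H+1)/(H+t) with H ≥ 1 and weights α_t^i := α_i ∏_{j=i+1}^t (1-α_j), for every fixed i ≥ 1, the infinite sum over t of α_t^i from t = i to infinity converges and equals 1 + 1/H. -/

import Mathlib

/-- Learning rate `α_t = (H+1)/(H+t)`. -/
noncomputable def lr (H t : ℕ) : ℝ := (H + 1) / (H + t)

/-- Weight `α_t^i = α_i ∏_{j=i+1}^t (1 - α_j)`. -/
noncomputable def lrW (H t i : ℕ) : ℝ :=
  lr H i * ∏ j ∈ Finset.Icc (i + 1) t, (1 - lr H j)

noncomputable def lrP (H i n : ℕ) : ℝ :=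
  ∏ k ∈ Finset.range n, ((i : ℝ) + k) / ((H : ℝ) + i + k)

lemma lrW_closed (H : ℕ) (hH : 1 ≤ H) (i : ℕ) (hi : 1 ≤ i) (n : ℕ) :
    lrW H (i + n) i = ((H : ℝ) + 1) / ((H : ℝ) + i + n) * lrP H i n := by
  have hHpos : (0 : ℝ) < H := by exact_mod_cast hH
  have hipos : (0 : ℝ) < i := by exact_mod_cast hi
  induction n with
  | zero =>
    simp [lrW, lrP, lr]
  | succ n ih =>
    have h1 : i + 1 ≤ i + n + 1 := by omega
    have hx : (0 : ℝ) < (H : ℝ) + i + n := by positivity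
    have hy : (0 : ℝ) < (H : ℝ) + i + n + 1 := by positivity
    have hstep : lrW H (i + (n + 1)) i = lrW H (i + n) i * (1 - lr H (i + n + 1)) := by
      have : i + (n + 1) = (i + n) + 1 := by omega
      rw [this, lrW, lrW, Finset.prod_Icc_succ_top h1]
      ring
    rw [hstep, ih]
    have hlr : (1 : ℝ) - lr H (i + n + 1) = ((i : ℝ) + n) / ((H : ℝ) + i + n + 1) := by
      rw [lr]
      push_cast
      field_simp
      ring
    rw [hlr]
    simp only [lrP, Finset.prod_range_succ]
    push_cast
    field_simp
    ring

lemma lrP_bounds (H : ℕ) (hH : 1 ≤ H) (i : ℕ) (hi : 1 ≤ i) (n : ℕ) :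
    0 ≤ lrP H i n ∧ lrP H i n ≤ (i : ℝ) / ((i : ℝ) + n) := by
  have hHpos : (0 : ℝ) < H := by exact_mod_cast hH
  have hH1 : (1 : ℝ) ≤ H := by exact_mod_cast hH
  have hipos : (0 : ℝ) < i := by exact_mod_cast hi
  induction n with
  | zero =>
    constructor
    · simp [lrP]
    · simp [lrP]
      rw [div_self (ne_of_gt hipos)]
  | succ n ih =>
    obtain ⟨h0, h1⟩ := ih
    have hin : (0 : ℝ) < (i : ℝ) + n := by positivity
    have hin1 : (0 : ℝ) < (i : ℝ) + n + 1 := by positivity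
    have hHin : (0 : ℝ) < (H : ℝ) + i + n := by positivity
    have hfac0 : (0 : ℝ) ≤ ((i : ℝ) + n) / ((H : ℝ) + i + n) := by positivity
    constructor
    · rw [lrP, Finset.prod_range_succ, ← lrP]
      exact mul_nonneg h0 hfac0
    · rw [lrP, Finset.prod_range_succ, ← lrP]
      push_cast
      have hfac : ((i : ℝ) + n) / ((H : ℝ) + i + n) ≤ ((i : ℝ) + n) / ((i : ℝ) + n + 1) := by
        apply div_le_div_of_nonneg_left (le_of_lt hin) hin1
        linarith
      calc lrP H i n * (((i : ℝ) + n) / ((H : ℝ) + i + n))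
          ≤ ((i : ℝ) / ((i : ℝ) + n)) * (((i : ℝ) + n) / ((i : ℝ) + n + 1)) := by
            apply mul_le_mul h1 hfac hfac0 (by positivity)
        _ = (i : ℝ) / ((i : ℝ) + n + 1) := by
            rw [div_mul_div_comm, mul_comm ((i:ℝ)+n), mul_div_mul_right _ _ hin.ne']
        _ = (i : ℝ) / ((i : ℝ) + (↑n + 1)) := by ring_nf

theorem stmt4 (H : ℕ) (hH : 1 ≤ H) (i : ℕ) (hi : 1 ≤ i) :
    HasSum (fun n : ℕ => lrW H (i + n) i) (1 + 1 / (H : ℝ)) := by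
  have hHpos : (0 : ℝ) < H := by exact_mod_cast hH
  have hipos : (0 : ℝ) < i := by exact_mod_cast hi
  set g : ℕ → ℝ := fun n => (1 + 1 / (H : ℝ)) * lrP H i n with hg
  have hkey : ∀ n, lrW H (i + n) i = g n - g (n + 1) := by
    intro n
    rw [lrW_closed H hH i hi n, hg]
    simp only
    simp only [lrP, Finset.prod_range_succ]
    have hx : (0 : ℝ) < (H : ℝ) + i + n := by positivity
    field_simp
    ring
  have hnonneg : ∀ n, 0 ≤ lrW H (i + n) i := by
    intro n
    rw [lrW_closed H hH i hi n]
    have := (lrP_bounds H hH i hi n).1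
    positivity
  rw [hasSum_iff_tendsto_nat_of_nonneg hnonneg]
  have hsum : ∀ N, ∑ n ∈ Finset.range N, lrW H (i + n) i = g 0 - g N := by
    intro N
    calc ∑ n ∈ Finset.range N, lrW H (i + n) i
        = ∑ n ∈ Finset.range N, (g n - g (n + 1)) := by
          exact Finset.sum_congr rfl fun n _ => hkey n
      _ = g 0 - g N := Finset.sum_range_sub' g N
  simp only [hsum]
  have hg0 : g 0 = 1 + 1 / (H : ℝ) := by simp [hg, lrP]
  have hgtend : Filter.Tendsto g Filter.atTop (nhds 0) := by
    have hb : Filter.Tendsto (fun n : ℕ => (i : ℝ) / ((i : ℝ) + n)) Filter.atTop (nhds 0) := by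
      apply Filter.Tendsto.div_atTop tendsto_const_nhds
      apply Filter.tendsto_atTop_add_const_left
      exact tendsto_natCast_atTop_atTop
    have hP : Filter.Tendsto (fun n : ℕ => lrP H i n) Filter.atTop (nhds 0) := by
      apply squeeze_zero (fun n => (lrP_bounds H hH i hi n).1)
        (fun n => (lrP_bounds H hH i hi n).2) hb
    have := hP.const_mul (1 + 1 / (H : ℝ))
    simpa [hg] using this
  have : Filter.Tendsto (fun N => g 0 - g N) Filter.atTop (nhds (g 0 - 0)) :=
    Filter.Tendsto.sub tendsto_const_nhds hgtend
  simp only [sub_zero] at this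
  simpa [hg0] using this
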